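/- arXiv:1503.06747 — 13 statements merged into one kernel-verified Lean document; each statement's English description precedes it below -/
import Mathlib

section
/- Let a_1,...,a_n and b_1,...,b_n be real numbers with sum of a_i equal to 0 and sum of b_i equal to 0. Then |∑_i a_i b_i^2| ≤ ((n-2)/√(n(n-1))) (∑_i a_i^2)^{1/2} (∑_i b_i^2). -/
open Finset

lemma expand_sum (n : ℕ) (f : Fin n → ℝ) (c4 c3 c2 c1 c0 : ℝ) :
    ∑ j, (c4*(f j)^4 + c3*(f j)^3 + c2*(f j)^2 + c1*(f j) + c0)
      = c4*(∑ j, (f j)^4) + c3*(∑ j, (f j)^3) + c2*(∑ j, (f j)^2) + c1*(∑ j, f j) + n*c0 := by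
  simp [Finset.sum_add_distrib, ← Finset.mul_sum, Finset.card_univ, mul_comm]

lemma kurt (n : ℕ) (hn : 3 ≤ n) (b : Fin n → ℝ) (hb : ∑ i, b i = 0) :
    (n:ℝ)*((n:ℝ)-1) * (∑ i, (b i)^4) ≤ ((n:ℝ)^2 - 3*(n:ℝ) + 3) * (∑ i, (b i)^2)^2 := by
  have hn3 : (3:ℝ) ≤ (n:ℝ) := by exact_mod_cast hn
  set p1 := ∑ i, b i with hp1
  set p2 := ∑ i, (b i)^2 with hp2
  set p3 := ∑ i, (b i)^3 with hp3
  set p4 := ∑ i, (b i)^4 with hp4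
  set A : ℝ := ((n:ℝ)-1)*((n:ℝ)-2) with hA
  set B : ℝ := (n:ℝ)-1 with hB
  set F : Fin n → Fin n → ℝ :=
    fun i j => (A * b i * b j + B*((b i)^2 + (b j)^2) - p2)^2 with hF
  have inner : ∀ i, ∑ j, F i j
      = (n:ℝ)*B^2*(b i)^4 + (2*A*B*p1)*(b i)^3
        + ((A^2 + 2*B^2)*p2 - 2*(n:ℝ)*B*p2)*(b i)^2
        + (2*A*B*p3 - 2*A*p2*p1)*(b i)
        + (B^2*p4 + (n:ℝ)*p2^2 - 2*B*p2^2) := by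
    intro i
    have step : ∀ j, F i j
        = (B^2)*(b j)^4 + (2*A*B*(b i))*(b j)^3
          + (A^2*(b i)^2 + 2*B^2*(b i)^2 - 2*B*p2)*(b j)^2
          + (2*A*B*(b i)^3 - 2*A*p2*(b i))*(b j)
          + (B^2*(b i)^4 + p2^2 - 2*B*p2*(b i)^2) := by
      intro j; simp only [hF]; ring
    rw [Finset.sum_congr rfl (fun j _ => step j), expand_sum, ← hp1, ← hp2, ← hp3, ← hp4]
    ring
  have hQ : ∑ i, ∑ j, F i j
      = 2*(n:ℝ)*B^2*p4 + 4*A*B*p1*p3 - 2*A*p2*p1^2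
        + (A^2 + 2*B^2)*p2^2 - 4*(n:ℝ)*B*p2^2 + (n:ℝ)^2*p2^2 := by
    rw [Finset.sum_congr rfl (fun i _ => inner i), expand_sum, ← hp1, ← hp2, ← hp3, ← hp4]
    ring
  have hD : ∑ i, F i i = (A+2*B)^2*p4 - 2*(A+2*B)*p2^2 + (n:ℝ)*p2^2 := by
    have step : ∀ i, F i i
        = ((A+2*B)^2)*(b i)^4 + (0:ℝ)*(b i)^3 + (-2*(A+2*B)*p2)*(b i)^2
          + (0:ℝ)*(b i) + p2^2 := by
      intro i; simp only [hF]; ring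
    rw [Finset.sum_congr rfl (fun i _ => step i), expand_sum, ← hp2, ← hp4]
    ring
  have key : 0 ≤ ∑ i, ∑ j ∈ Finset.univ.erase i, F i j := by
    apply Finset.sum_nonneg; intro i _
    apply Finset.sum_nonneg; intro j _
    positivity
  have hsplit : ∑ i, ∑ j ∈ Finset.univ.erase i, F i j
      = (∑ i, ∑ j, F i j) - ∑ i, F i i := by
    rw [← Finset.sum_sub_distrib]
    refine Finset.sum_congr rfl fun i _ => ?_
    rw [← Finset.add_sum_erase _ _ (Finset.mem_univ i)]
    ring
  have hzero : p1 = 0 := hb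
  have hval : ∑ i, ∑ j ∈ Finset.univ.erase i, F i j
      = ((n:ℝ)-1)*((n:ℝ)-2)*((((n:ℝ)^2 - 3*(n:ℝ) + 3))*p2^2 - (n:ℝ)*((n:ℝ)-1)*p4) := by
    rw [hsplit, hQ, hD, hzero, hA, hB]; ring
  rw [hval] at key
  have hpos : 0 < ((n:ℝ)-1)*((n:ℝ)-2) := by nlinarith
  have h : 0 ≤ ((n:ℝ)^2 - 3*(n:ℝ) + 3)*p2^2 - (n:ℝ)*((n:ℝ)-1)*p4 := by
    by_contra hc
    push_neg at hc
    nlinarith [mul_pos hpos (neg_pos.mpr hc)]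
  rw [← hB] at h
  linarith

theorem stmt_0 (n : ℕ) (hn : 2 ≤ n) (a b : Fin n → ℝ)
    (ha : ∑ i, a i = 0) (hb : ∑ i, b i = 0) :
    |∑ i, a i * (b i)^2| ≤
      ((n : ℝ) - 2) / Real.sqrt (n * (n - 1)) * Real.sqrt (∑ i, (a i)^2) * (∑ i, (b i)^2) := by
  rcases eq_or_lt_of_le hn with h2 | h3
  · -- n = 2
    subst h2
    simp only [Fin.sum_univ_two] at ha hb ⊢
    have ha1 : a 1 = -a 0 := by linarith
    have hkey : a 0 * b 0 ^ 2 + a 1 * b 1 ^ 2 = 0 := by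
      have hb1 : b 1 = -b 0 := by linarith
      rw [ha1, hb1]; ring
    rw [hkey, abs_zero]
    norm_num
  · -- 3 ≤ n
    have hn3 : 3 ≤ n := h3
    have hn3' : (3:ℝ) ≤ (n:ℝ) := by exact_mod_cast hn3
    have hnne : (n:ℝ) ≠ 0 := by positivity
    have hn2 : (0:ℝ) ≤ (n:ℝ) - 2 := by linarith
    have hM : (0:ℝ) < (n:ℝ) * ((n:ℝ) - 1) := by nlinarith
    set s := ∑ i, (b i)^2 with hs
    set q := ∑ i, (b i)^4 with hq
    set As := ∑ i, (a i)^2 with hAs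
    have hs0 : 0 ≤ s := Finset.sum_nonneg fun i _ => sq_nonneg _
    have hAs0 : 0 ≤ As := Finset.sum_nonneg fun i _ => sq_nonneg _
    have hC : (∑ i, a i * (b i)^2)^2 ≤ As * (∑ i, ((b i)^2 - s/(n:ℝ))^2) := by
      have h := Finset.sum_mul_sq_le_sq_mul_sq Finset.univ a (fun i => (b i)^2 - s/(n:ℝ))
      have heq : ∑ i, a i * ((b i)^2 - s/(n:ℝ)) = ∑ i, a i * (b i)^2 := by
        have step : ∀ i : Fin n, a i * ((b i)^2 - s/(n:ℝ))
            = a i * (b i)^2 - (s/(n:ℝ)) * a i := fun i => by ring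
        rw [Finset.sum_congr rfl fun i _ => step i, Finset.sum_sub_distrib,
          ← Finset.mul_sum, ha, mul_zero, sub_zero]
      rw [heq] at h
      exact h
    have hG : ∑ i, ((b i)^2 - s/(n:ℝ))^2 = q - s^2/(n:ℝ) := by
      have step : ∀ i : Fin n, ((b i)^2 - s/(n:ℝ))^2
          = (1:ℝ)*(b i)^4 + (0:ℝ)*(b i)^3 + (-2*(s/(n:ℝ)))*(b i)^2 + (0:ℝ)*(b i)
            + (s/(n:ℝ))^2 := fun i => by ring
      rw [Finset.sum_congr rfl fun i _ => step i, expand_sum, ← hs, ← hq]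
      field_simp
      ring
    have hkurt := kurt n hn3 b hb
    rw [← hs, ← hq] at hkurt
    have hq2 : q - s^2/(n:ℝ) ≤ ((n:ℝ)-2)^2 / ((n:ℝ)*((n:ℝ)-1)) * s^2 := by
      rw [div_mul_eq_mul_div, le_div_iff₀ hM]
      have e : (q - s^2/(n:ℝ)) * ((n:ℝ)*((n:ℝ)-1)) = (n:ℝ)*((n:ℝ)-1)*q - ((n:ℝ)-1)*s^2 := by
        field_simp
      rw [e]
      nlinarith [hkurt]
    have hX2 : (∑ i, a i * (b i)^2)^2 ≤ ((n:ℝ)-2)^2/((n:ℝ)*((n:ℝ)-1)) * As * s^2 := by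
      calc (∑ i, a i * (b i)^2)^2 ≤ As * (q - s^2/(n:ℝ)) := by rw [← hG]; exact hC
        _ ≤ As * (((n:ℝ)-2)^2 / ((n:ℝ)*((n:ℝ)-1)) * s^2) :=
            mul_le_mul_of_nonneg_left hq2 hAs0
        _ = ((n:ℝ)-2)^2/((n:ℝ)*((n:ℝ)-1)) * As * s^2 := by ring
    have habs : |∑ i, a i * (b i)^2| = Real.sqrt ((∑ i, a i * (b i)^2)^2) :=
      (Real.sqrt_sq_eq_abs _).symm
    rw [habs]
    calc Real.sqrt ((∑ i, a i * (b i)^2)^2)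
        ≤ Real.sqrt (((n:ℝ)-2)^2/((n:ℝ)*((n:ℝ)-1)) * As * s^2) := Real.sqrt_le_sqrt hX2
      _ = ((n:ℝ)-2)/Real.sqrt ((n:ℝ)*((n:ℝ)-1)) * Real.sqrt As * s := by
          rw [Real.sqrt_mul (by positivity), Real.sqrt_mul (by positivity),
            Real.sqrt_div (by positivity), Real.sqrt_sq hn2, Real.sqrt_sq hs0]
end

section
/- Let a_1,...,a_n be real numbers with ∑_i a_i = 0. Then |∑_i a_i^3| ≤ ((n-2)/√(n(n-1))) (∑_i a_i^2)^{3/2}. -/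
theorem key_ineq (n : ℕ) (hn : 2 ≤ n) (a : Fin n → ℝ) (ha : ∑ i, a i = 0) :
    ∑ i, (a i)^3 ≤ ((n : ℝ) - 2) * Real.sqrt ((∑ i, (a i)^2) / (n * (n - 1))) * (∑ i, (a i)^2) := by
  set Q := ∑ i, (a i)^2 with hQdef
  have hQ : 0 ≤ Q := Finset.sum_nonneg fun i _ => sq_nonneg _
  have hn1 : (1:ℝ) ≤ (n:ℝ) - 1 := by
    have : (2:ℝ) ≤ n := by exact_mod_cast hn
    linarith
  have hnpos : (0:ℝ) < n := by linarith
  have hd : (0:ℝ) < (n:ℝ) * ((n:ℝ) - 1) := by nlinarith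
  set s := Real.sqrt (Q / ((n:ℝ) * ((n:ℝ) - 1))) with hsdef
  have hs : 0 ≤ s := Real.sqrt_nonneg _
  have hs2 : s ^ 2 = Q / ((n:ℝ) * ((n:ℝ) - 1)) := Real.sq_sqrt (by positivity)
  have hQeq : (n:ℝ) * ((n:ℝ) - 1) * s ^ 2 = Q := by
    rw [hs2]; field_simp [hd.ne']
  -- each a i ≤ (n-1) * s
  have hM : ∀ i, a i ≤ ((n:ℝ) - 1) * s := by
    intro i
    have herase : ∑ j ∈ Finset.univ.erase i, a j = - a i := by
      have h : (∑ j ∈ Finset.univ.erase i, a j) + a i = 0 := by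
        simpa [ha] using Finset.sum_erase_add Finset.univ a (Finset.mem_univ i)
      linarith
    have herase2 : ∑ j ∈ Finset.univ.erase i, (a j)^2 = Q - (a i)^2 := by
      have h : (∑ j ∈ Finset.univ.erase i, (a j)^2) + (a i)^2 = Q := by
        simpa [← hQdef] using Finset.sum_erase_add Finset.univ (fun j => (a j)^2) (Finset.mem_univ i)
      linarith
    have hc : (∑ j ∈ Finset.univ.erase i, a j) ^ 2
        ≤ (Finset.univ.erase i).card * ∑ j ∈ Finset.univ.erase i, (a j)^2 :=
      sq_sum_le_card_mul_sum_sq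
    have hcard : ((Finset.univ.erase i).card : ℝ) = (n:ℝ) - 1 := by
      rw [Finset.card_erase_of_mem (Finset.mem_univ i)]
      simp only [Finset.card_univ, Fintype.card_fin]
      have h1 : 1 ≤ n := by omega
      push_cast [Nat.cast_sub h1]
      ring
    rw [herase, herase2, hcard] at hc
    have hsq : (a i) ^ 2 ≤ (((n:ℝ) - 1) * s) ^ 2 := by
      have h1 : (n:ℝ) * (a i)^2 ≤ ((n:ℝ) - 1) * Q := by nlinarith
      have h2 : (((n:ℝ) - 1) * s)^2 = ((n:ℝ) - 1) * Q / n := by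
        rw [mul_pow, hs2]
        field_simp
      rw [h2]
      rw [le_div_iff₀ hnpos]
      nlinarith
    nlinarith [hs, mul_nonneg (sub_nonneg.2 (by linarith : (0:ℝ) ≤ (n:ℝ)-1)) hs]
  have hsum : ∑ i, (a i + s)^2 * (a i - ((n:ℝ) - 1) * s) ≤ 0 :=
    Finset.sum_nonpos fun i _ => mul_nonpos_of_nonneg_of_nonpos (sq_nonneg _)
      (sub_nonpos.2 (hM i))
  have hexp : ∑ i, (a i + s)^2 * (a i - ((n:ℝ) - 1) * s)
      = (∑ i, (a i)^3) + (3 - (n:ℝ)) * s * Q + (3 - 2*(n:ℝ)) * s^2 * (∑ i, a i)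
        - (n:ℝ) * (((n:ℝ) - 1) * s^3) := by
    rw [Finset.sum_congr rfl (fun i _ => show (a i + s)^2 * (a i - ((n:ℝ) - 1) * s)
      = (a i)^3 + (3 - (n:ℝ)) * s * (a i)^2 + (3 - 2*(n:ℝ)) * s^2 * (a i)
        - ((n:ℝ) - 1) * s^3 from by ring)]
    simp only [Finset.sum_sub_distrib, Finset.sum_add_distrib, ← Finset.mul_sum,
      Finset.sum_const, Finset.card_univ, Fintype.card_fin, nsmul_eq_mul]
    rw [← hQdef]
    ring
  rw [hexp, ha] at hsum
  have hcube : (n:ℝ) * (((n:ℝ) - 1) * s^3) = Q * s := by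
    have : (n:ℝ) * (((n:ℝ) - 1) * s^3) = ((n:ℝ) * ((n:ℝ)-1) * s^2) * s := by ring
    rw [this, hQeq]
  rw [hcube] at hsum
  nlinarith [hsum]

theorem stmt_1 (n : ℕ) (hn : 2 ≤ n) (a : Fin n → ℝ) (ha : ∑ i, a i = 0) :
    |∑ i, (a i)^3| ≤
      ((n : ℝ) - 2) / Real.sqrt (n * (n - 1)) * (∑ i, (a i)^2) ^ ((3 : ℝ)/2) := by
  set Q := ∑ i, (a i)^2 with hQdef
  have hQ : 0 ≤ Q := Finset.sum_nonneg fun i _ => sq_nonneg _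
  have h32 : Q ^ ((3:ℝ)/2) = Real.sqrt Q ^ 3 := by
    rw [← Real.rpow_natCast (Real.sqrt Q) 3, Real.sqrt_eq_rpow, ← Real.rpow_mul hQ]
    norm_num
  have hRHS : ((n:ℝ) - 2) / Real.sqrt ((n:ℝ) * ((n:ℝ) - 1)) * Q ^ ((3:ℝ)/2)
      = ((n:ℝ) - 2) * Real.sqrt (Q / ((n:ℝ) * ((n:ℝ) - 1))) * Q := by
    rw [h32, Real.sqrt_div hQ]
    have h3 : Real.sqrt Q ^ 3 = Q * Real.sqrt Q := by
      rw [pow_succ, Real.sq_sqrt hQ]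
    rw [h3]; ring
  rw [hRHS]
  have h1 := key_ineq n hn a ha
  have h2 := key_ineq n hn (fun i => -a i) (by simp [ha])
  simp only [show ∀ x:ℝ, (-x)^3 = -x^3 from fun x => by ring,
    show ∀ x:ℝ, (-x)^2 = x^2 from fun x => by ring, Finset.sum_neg_distrib] at h2
  rw [abs_le]
  constructor <;> [linarith [h2]; linarith [h1]]
end

section
/- For n ≥ 6, c < 0 and y > -n²c, one has ((n-2)/√(n(n-1)))·√(y·α̊(y)) = y/n - α̊(y) + nc. -/
theorem stmt_3 (n : ℕ) (hn : 6 ≤ n) (c : ℝ) (hc : c < 0) (y : ℝ) (hy : y > -(n^2 : ℝ) * c)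
    (α : ℝ → ℝ)
    (hα : ∀ z : ℝ, α z = n * c + ((n^2 - 2*n + 2 : ℝ) / (2 * (n - 1) * n)) * z
      - ((n - 2 : ℝ) / (2 * (n - 1))) * Real.sqrt (z^2 + 4 * (n - 1) * c * z)) :
    ((n : ℝ) - 2) / Real.sqrt (n * (n - 1)) * Real.sqrt (y * α y) = y / n - α y + n * c := by
  have hn6 : (6:ℝ) ≤ (n:ℝ) := by exact_mod_cast hn
  set N := (n:ℝ) with hNdef
  have hN0 : 0 < N := by linarith
  have hN1 : 0 < N - 1 := by linarith
  have hN2 : 0 < N - 2 := by linarith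
  have hy0 : 0 < y := by nlinarith
  have hq : 0 ≤ y^2 + 4*(N-1)*c*y := by nlinarith
  have hαy := hα y
  set s := Real.sqrt (y^2 + 4*(N-1)*c*y) with hsdef
  have hs0 : 0 ≤ s := Real.sqrt_nonneg _
  have hs2 : s^2 = y^2 + 4*(N-1)*c*y := Real.sq_sqrt hq
  -- division-free form of hαy
  have hα2 : 2*(N-1)*N*(α y) = 2*(N-1)*N*N*c + (N^2-2*N+2)*y - (N-2)*N*s := by
    rw [hαy]; field_simp
  set T := N*s - (N-2)*y with hTdef
  have hkey0 : 4*(N-1)*N*(y * α y) = T^2 := by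
    linear_combination 2*y*hα2 - N^2*hs2
  have h1 : (N*s)^2 - ((N-2)*y)^2 = 4*(N-1)*y*(y + N^2*c) := by
    linear_combination N^2*hs2
  have hyc : 0 < y + N^2*c := by nlinarith
  have hsum : 0 < N*s + (N-2)*y :=
    add_pos_of_nonneg_of_pos (mul_nonneg hN0.le hs0) (mul_pos hN2 hy0)
  have hprod : T * (N*s + (N-2)*y) = 4*(N-1)*y*(y + N^2*c) := by
    linear_combination h1
  have hT0 : 0 ≤ T := by
    nlinarith [hprod, hsum, mul_pos (mul_pos (by linarith : (0:ℝ) < 4*(N-1)) hy0) hyc]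
  set K := Real.sqrt (N*(N-1)) with hKdef
  have hKpos : 0 < K := Real.sqrt_pos.mpr (by positivity)
  have hK2 : K^2 = N*(N-1) := Real.sq_sqrt (by positivity)
  have hy_div : N * (y/N) = y := mul_div_cancel₀ y hN0.ne'
  have hR2 : 2*(N-1)*N*(y/N - α y + N*c) = (N-2)*T := by
    linear_combination 2*(N-1)*hy_div - hα2
  have h5 : y * α y = (T / (2*K))^2 := by
    rw [div_pow, mul_pow, hK2, eq_div_iff (by positivity)]
    linear_combination hkey0
  rw [h5, Real.sqrt_sq (by positivity)]
  rw [show y/N - α y + N*c = (N-2)*T/(2*(N-1)*N) from by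
    rw [eq_div_iff (by positivity)]; linear_combination hR2]
  field_simp
  linear_combination (-T)*hK2
end

section
/- For n ≥ 6, c < 0 and y > -n²c, one has 0 < α̊(y) < (y + n²c)/(n(n-1)). -/
set_option maxHeartbeats 1000000


theorem stmt_4 (n : ℕ) (hn : 6 ≤ n) (c : ℝ) (hc : c < 0) (y : ℝ) (hy : y > -(n^2 : ℝ) * c)
    (α : ℝ → ℝ)
    (hα : ∀ z : ℝ, α z = n * c + ((n^2 - 2*n + 2 : ℝ) / (2 * (n - 1) * n)) * z
      - ((n - 2 : ℝ) / (2 * (n - 1))) * Real.sqrt (z^2 + 4 * (n - 1) * c * z)) :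
    0 < α y ∧ α y < (y + n^2 * c) / (n * (n - 1)) := by
  have hN : (6:ℝ) ≤ (n:ℝ) := by exact_mod_cast hn
  set N := (n:ℝ) with hNdef
  clear_value N
  have ey := hα y
  have hy' : y > -N^2 * c := by push_cast at hy ⊢; linarith [hy]
  have hnc : 0 < -c := by linarith
  have hy0 : 0 < y := by nlinarith [mul_pos (show (0:ℝ) < N^2 by positivity) hnc]
  have hyc : 0 < y + N^2*c := by nlinarith
  have hrad : 0 < y^2 + 4*(N-1)*c*y := by
    have h1 : 0 < y + 4*(N-1)*c := by nlinarith [mul_pos (show (0:ℝ) < (N-2)^2 by nlinarith) hnc]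
    nlinarith [mul_pos hy0 h1]
  set s := Real.sqrt (y^2 + 4*(N-1)*c*y) with hsdef
  have hs0 : 0 ≤ s := Real.sqrt_nonneg _
  have hs2 : s^2 = y^2 + 4*(N-1)*c*y := Real.sq_sqrt hrad.le
  have hR' : 0 < 2*(N-1)*N^2*c + (N^2-2*N+2)*y := by nlinarith [mul_pos (show (0:ℝ) < N^2*(N-2)^2 by nlinarith) hnc]
  have hs2' : ((N-2)*N*s)^2 = (N-2)^2*N^2*(y^2+4*(N-1)*c*y) := by
    rw [show ((N-2)*N*s)^2 = (N-2)^2*N^2*s^2 from by ring, hs2]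
  have hsq : ((N-2)*N*s)^2 < (2*(N-1)*N^2*c + (N^2-2*N+2)*y)^2 := by
    nlinarith [hs2', mul_pos (mul_pos (show (0:ℝ) < 4*(N-1)^2 by nlinarith) hyc) hyc]
  have sU : (N-2)*N*s < 2*(N-1)*N^2*c + (N^2-2*N+2)*y := by
    exact lt_of_pow_lt_pow_left₀ 2 hR'.le hsq
  have sL : y + 2*N*c < s := by
    rcases lt_or_ge (y + 2*N*c) 0 with h|h
    · linarith
    · refine lt_of_pow_lt_pow_left₀ 2 hs0 ?_
      nlinarith [hs2, mul_pos hyc hnc]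
  have hN0 : (0:ℝ) < N := by linarith
  have hN1 : (0:ℝ) < N - 1 := by linarith
  have hd1 : (0:ℝ) < 2*(N-1)*N := by positivity
  have hd2 : (0:ℝ) < N*(N-1) := by positivity
  have key : α y = (2*(N-1)*N^2*c + (N^2-2*N+2)*y - (N-2)*N*s) / (2*(N-1)*N) := by
    rw [ey]
    field_simp
  constructor
  · rw [key]
    exact div_pos (by linarith) hd1
  · rw [key, div_lt_div_iff₀ hd1 hd2]
    nlinarith [mul_pos (show (0:ℝ) < N^2*(N-1)*(N-2) by nlinarith) (show (0:ℝ) < s - (y+2*N*c) by linarith)]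
end

section
/- For n ≥ 6, c < 0 and y > -n²c, the derivative of α̊ satisfies 0 < α̊'(y) < 1/(n(n-1)). -/
set_option maxHeartbeats 800000 in
theorem stmt_5 (n : ℕ) (hn : 6 ≤ n) (c : ℝ) (hc : c < 0) (y : ℝ) (hy : y > -(n^2 : ℝ) * c)
    (α : ℝ → ℝ)
    (hα : ∀ z : ℝ, α z = n * c + ((n^2 - 2*n + 2 : ℝ) / (2 * (n - 1) * n)) * z
      - ((n - 2 : ℝ) / (2 * (n - 1))) * Real.sqrt (z^2 + 4 * (n - 1) * c * z)) :
    0 < deriv α y ∧ deriv α y < 1 / (n * (n - 1)) := by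
  set N : ℝ := (n : ℝ) with hNdef
  have hN : (6:ℝ) ≤ N := by rw [hNdef]; exact_mod_cast hn
  have hN1 : (0:ℝ) < N - 1 := by linarith
  have hN2 : (0:ℝ) < N - 2 := by linarith
  have hN0 : (0:ℝ) < N := by linarith
  have hc2 : 0 < c^2 := by nlinarith
  set q : ℝ := y^2 + 4*(N-1)*c*y with hqdef
  have hy0 : 0 < y := by nlinarith
  have hyu : 0 < y + 2*(N-1)*c := by nlinarith [sq_nonneg (N-2)]
  have hq : 0 < q := by
    have h4 : 0 < y + 4*(N-1)*c := by nlinarith [sq_nonneg (N-2)]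
    have := mul_pos hy0 h4
    nlinarith [this]
  set s : ℝ := Real.sqrt q with hsdef
  have hs : 0 < s := Real.sqrt_pos.mpr hq
  have hs2 : s^2 = q := Real.sq_sqrt hq.le
  set A : ℝ := (N^2 - 2*N + 2) / (2 * (N - 1) * N) with hAdef
  set B : ℝ := (N - 2) / (2 * (N - 1)) with hBdef
  have hαf : α = fun z => N * c + A * z - B * Real.sqrt (z^2 + 4*(N-1)*c*z) := by
    funext z; rw [hα z]
  have hg : HasDerivAt (fun z : ℝ => z^2 + 4*(N-1)*c*z) (2*y + 4*(N-1)*c) y := by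
    have h1 := hasDerivAt_pow 2 y
    have h2 := (hasDerivAt_id y).const_mul (4*(N-1)*c)
    have := h1.add h2
    simpa [Pi.add_def] using this
  have hsq : HasDerivAt (fun z : ℝ => Real.sqrt (z^2 + 4*(N-1)*c*z))
      (1/(2*s) * (2*y + 4*(N-1)*c)) y := by
    have := (Real.hasDerivAt_sqrt hq.ne').comp y hg
    simpa [hsdef, hqdef, Function.comp_def] using this
  have hder : HasDerivAt α (A - B * (1/(2*s) * (2*y + 4*(N-1)*c))) y := by
    rw [hαf]
    have h1 : HasDerivAt (fun z : ℝ => N * c + A * z) A y := by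
      have := (hasDerivAt_id y).const_mul A
      have := (hasDerivAt_const y (N*c)).add this
      simpa [Pi.add_def] using this
    simpa [Pi.sub_def] using h1.sub (hsq.const_mul B)
  have hd : deriv α y = A - B * (1/(2*s) * (2*y + 4*(N-1)*c)) := hder.deriv
  -- key inequalities
  have hdiff : (y + 2*(N-1)*c)^2 - s^2 = 4*(N-1)^2*c^2 := by
    rw [hs2, hqdef]; ring
  have hkey2 : s < y + 2*(N-1)*c := by
    have hpos : 0 < 4*(N-1)^2*c^2 := by positivity
    nlinarith [hdiff, hpos, hs, hyu, mul_pos hs hyu]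
  have hqbig : N^2*(N-2)^2*c^2 < q := by
    have h1 : 0 < y + N^2*c := by linarith
    have h2 : 0 < y - (N-2)^2*c := by nlinarith [mul_pos (mul_pos hN2 hN2) (neg_pos.mpr hc)]
    nlinarith [mul_pos h1 h2]
  have hkey1 : N*(N-2)*(y + 2*(N-1)*c) < (N^2 - 2*N + 2) * s := by
    have hid : ((N^2-2*N+2)*s)^2 - (N*(N-2)*(y + 2*(N-1)*c))^2
        = 4*(N-1)^2*(q - N^2*(N-2)^2*c^2) := by
      rw [mul_pow, mul_pow, hs2, hqdef]; ring
    have h4 : 0 < 4*(N-1)^2*(q - N^2*(N-2)^2*c^2) :=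
      mul_pos (by positivity) (by linarith)
    have hsqcmp : (N*(N-2)*(y + 2*(N-1)*c))^2 < ((N^2 - 2*N + 2) * s)^2 := by linarith
    have hrhs : (0:ℝ) ≤ (N^2 - 2*N + 2) * s := by nlinarith
    exact lt_of_pow_lt_pow_left₀ 2 hrhs hsqcmp
  have hBeq : B * (1/(2*s) * (2*y + 4*(N-1)*c)) = (N-2)*(y + 2*(N-1)*c) / (2*(N-1)*s) := by
    rw [hBdef]; field_simp; ring
  constructor
  · rw [hd, hBeq, hAdef, sub_pos, div_lt_div_iff₀ (by positivity) (by positivity)]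
    have := mul_lt_mul_of_pos_left hkey1 (show (0:ℝ) < 2*(N-1) by linarith)
    nlinarith [this]
  · have hAB : A - B = 1 / (N * (N-1)) := by
      rw [hAdef, hBdef]
      field_simp
      ring
    have hBlt : B < B * (1/(2*s) * (2*y + 4*(N-1)*c)) := by
      rw [hBeq, hBdef, div_lt_div_iff₀ (by linarith) (by positivity)]
      have := mul_lt_mul_of_pos_left hkey2 (show (0:ℝ) < 2*(N-1)*(N-2) by positivity)
      nlinarith [this]
    rw [hd]
    calc A - B * (1/(2*s) * (2*y + 4*(N-1)*c)) < A - B := by linarith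
    _ = 1 / (N * (N-1)) := hAB
end

section
/- For n ≥ 6, c < 0 and y > -n²c, one has 2√y · α̊'(y) < √(α̊(y)). -/
set_option maxHeartbeats 1600000 in
theorem stmt_7 (n : ℕ) (hn : 6 ≤ n) (c : ℝ) (hc : c < 0) (y : ℝ) (hy : y > -(n^2 : ℝ) * c)
    (α : ℝ → ℝ)
    (hα : ∀ z : ℝ, α z = n * c + ((n^2 - 2*n + 2 : ℝ) / (2 * (n - 1) * n)) * z
      - ((n - 2 : ℝ) / (2 * (n - 1))) * Real.sqrt (z^2 + 4 * (n - 1) * c * z)) :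
    2 * Real.sqrt y * deriv α y < Real.sqrt (α y) := by
  set N : ℝ := (n : ℝ) with hNdef
  have hN6 : (6:ℝ) ≤ N := by rw [hNdef]; exact_mod_cast hn
  have hy0 : 0 < y := by nlinarith
  have hv0 : 0 < y + 4*(N-1)*c := by nlinarith
  set u : ℝ := Real.sqrt y with hudef
  set v : ℝ := Real.sqrt (y + 4*(N-1)*c) with hvdef
  set w : ℝ := Real.sqrt ((N-1)*N) with hwdef
  have hu2 : u^2 = y := Real.sq_sqrt hy0.le
  have hv2 : v^2 = y + 4*(N-1)*c := Real.sq_sqrt hv0.le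
  have hw2 : w^2 = (N-1)*N := Real.sq_sqrt (by nlinarith)
  have hup : 0 < u := Real.sqrt_pos.2 hy0
  have hvp : 0 < v := Real.sqrt_pos.2 hv0
  have hwp : 0 < w := Real.sqrt_pos.2 (by nlinarith)
  have hN1 : N - 1 ≠ 0 := by nlinarith
  have hN0 : N ≠ 0 := by nlinarith
  have hQ : y^2 + 4*(N-1)*c*y = (u*v)^2 := by rw [mul_pow, hu2, hv2]; ring
  have hQpos : 0 < y^2 + 4*(N-1)*c*y := by rw [hQ]; positivity
  have hsq : Real.sqrt (y^2 + 4*(N-1)*c*y) = u*v := by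
    rw [hQ, Real.sqrt_sq (by positivity)]
  -- derivative
  have hinner : HasDerivAt (fun z : ℝ => z^2 + 4*(N-1)*c*z) (2*y + 4*(N-1)*c) y := by
    have h1 := hasDerivAt_pow 2 y
    have h2 := (hasDerivAt_id y).const_mul (4*(N-1)*c)
    have := h1.add h2
    exact this.congr_deriv (by push_cast; ring)
  have hsqrt : HasDerivAt (fun z : ℝ => Real.sqrt (z^2 + 4*(N-1)*c*z))
      (1 / (2 * (u*v)) * (2*y + 4*(N-1)*c)) y := by
    have := (Real.hasDerivAt_sqrt hQpos.ne').comp y hinner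
    simpa [hsq, Function.comp_def] using this
  have hαeq : α = fun z : ℝ => N*c + ((N^2 - 2*N + 2) / (2*(N-1)*N)) * z
      - ((N-2)/(2*(N-1))) * Real.sqrt (z^2 + 4*(N-1)*c*z) := by
    funext z; exact hα z
  have hD : HasDerivAt α
      (((N^2 - 2*N + 2) / (2*(N-1)*N)) -
        ((N-2)/(2*(N-1))) * (1 / (2 * (u*v)) * (2*y + 4*(N-1)*c))) y := by
    rw [hαeq]
    have := ((hasDerivAt_const y (N*c)).add
      ((hasDerivAt_id y).const_mul ((N^2 - 2*N + 2) / (2*(N-1)*N)))).sub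
      (hsqrt.const_mul ((N-2)/(2*(N-1))))
    exact this.congr_deriv (by ring)
  have hderiv : deriv α y = ((N^2 - 2*N + 2) / (2*(N-1)*N)) -
        ((N-2)/(2*(N-1))) * (1 / (2 * (u*v)) * (2*y + 4*(N-1)*c)) := hD.deriv
  -- P > 0
  have hPpos : 0 < N*v - (N-2)*u := by
    have h1 : ((N-2)*u)^2 < (N*v)^2 := by
      rw [mul_pow, mul_pow, hu2, hv2]; nlinarith
    have := lt_of_pow_lt_pow_left₀ 2 (by positivity : (0:ℝ) ≤ N*v) h1
    linarith
  -- value of α y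
  have hc2 : c = (v^2 - u^2)/(4*(N-1)) := by
    rw [hv2, hu2]; field_simp; ring
  have hα4 : α y = (N*v - (N-2)*u)^2 / (4*((N-1)*N)) := by
    rw [hα y, hsq, ← hu2]
    nth_rewrite 1 [hc2]
    field_simp
    ring
  have hαval : α y = ((N*v - (N-2)*u)/(2*w))^2 := by
    rw [div_pow, mul_pow, hw2, hα4]
    norm_num
  have hsqα : Real.sqrt (α y) = (N*v - (N-2)*u)/(2*w) := by
    rw [hαval, Real.sqrt_sq (by positivity)]
  -- key inequality N*u < (N-2+w)*v
  have hwgt : N - 1 < w := by nlinarith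
  have hTp : 0 < N-2+w := by nlinarith
  have hS : N^2 ≤ (N-2+w)*(N-2) := by nlinarith
  have hv2' : (N-2)^2 * y < N^2 * v^2 := by rw [hv2]; nlinarith
  have hkey : N*u < (N-2+w)*v := by
    have h1 : (N*u)^2 < ((N-2+w)*v)^2 := by
      rw [mul_pow, mul_pow, hu2]
      have hS2 : (N^2)^2 ≤ ((N-2+w)*(N-2))^2 := by nlinarith
      have F1 := mul_lt_mul_of_pos_left hv2' (mul_pos hTp hTp)
      have F2 := mul_le_mul_of_nonneg_right hS2 hy0.le
      nlinarith [sq_nonneg N, hN6]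
    have := lt_of_pow_lt_pow_left₀ 2 (by positivity : (0:ℝ) ≤ (N-2+w)*v) h1
    linarith
  have hMlt : N*u - (N-2)*v < w*v := by linarith
  -- finish
  rw [hderiv, hsqα]
  have h2y : 2*y + 4*(N-1)*c = u^2 + v^2 := by rw [hu2, hv2]; ring
  rw [h2y]
  have hL : 2*u*(((N^2 - 2*N + 2) / (2*(N-1)*N)) -
        ((N-2)/(2*(N-1))) * (1 / (2 * (u*v)) * (u^2 + v^2)))
      = (N*v - (N-2)*u)*(N*u - (N-2)*v)/(2*((N-1)*N)*v) := by
    field_simp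
    ring
  rw [hL, div_lt_div_iff₀ (by nlinarith) (by nlinarith)]
  nlinarith [mul_pos hPpos hwp, mul_pos hPpos hvp, hw2,
    mul_lt_mul_of_pos_left hMlt (mul_pos (mul_pos two_pos hPpos) hwp)]
end

section
/- For n ≥ 6, c < 0 and y > -n²c, one has y·α̊'(y) > α̊(y). -/
theorem stmt_8 (n : ℕ) (hn : 6 ≤ n) (c : ℝ) (hc : c < 0) (y : ℝ) (hy : y > -(n^2 : ℝ) * c)
    (α : ℝ → ℝ)
    (hα : ∀ z : ℝ, α z = n * c + ((n^2 - 2*n + 2 : ℝ) / (2 * (n - 1) * n)) * z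
      - ((n - 2 : ℝ) / (2 * (n - 1))) * Real.sqrt (z^2 + 4 * (n - 1) * c * z)) :
    y * deriv α y > α y := by
  set N : ℝ := (n : ℝ) with hN
  have hN6 : (6 : ℝ) ≤ N := by rw [hN]; exact_mod_cast hn
  have hNpos : 0 < N := by linarith
  have hN1 : 0 < N - 1 := by linarith
  have hN2 : 0 < N - 2 := by linarith
  have hcneg : 0 < -c := by linarith
  have hypos : 0 < y := by nlinarith
  have hsum : 0 < y + 4 * (N - 1) * c := by nlinarith [sq_nonneg (N - 2)]
  have hfy : 0 < y ^ 2 + 4 * (N - 1) * c * y := by nlinarith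
  set s : ℝ := Real.sqrt (y ^ 2 + 4 * (N - 1) * c * y) with hsdef
  have hspos : 0 < s := Real.sqrt_pos.mpr hfy
  have hs2 : s ^ 2 = y ^ 2 + 4 * (N - 1) * c * y := Real.sq_sqrt hfy.le
  have h1 : HasDerivAt (fun z : ℝ => z ^ 2 + 4 * (N - 1) * c * z)
      (2 * y + 4 * (N - 1) * c) y := by
    have := (hasDerivAt_pow 2 y).add ((hasDerivAt_id y).const_mul (4 * (N - 1) * c))
    simpa [mul_comm, Pi.add_def] using this
  have h2 : HasDerivAt (fun z : ℝ => Real.sqrt (z ^ 2 + 4 * (N - 1) * c * z))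
      (1 / (2 * s) * (2 * y + 4 * (N - 1) * c)) y :=
    (Real.hasDerivAt_sqrt hfy.ne').comp y h1
  have h3 : HasDerivAt α
      ((N ^ 2 - 2 * N + 2) / (2 * (N - 1) * N)
        - (N - 2) / (2 * (N - 1)) * (1 / (2 * s) * (2 * y + 4 * (N - 1) * c))) y := by
    have h4 := ((hasDerivAt_const y (N * c)).add
        ((hasDerivAt_id y).const_mul ((N ^ 2 - 2 * N + 2) / (2 * (N - 1) * N)))).sub
        (h2.const_mul ((N - 2) / (2 * (N - 1))))
    have hfun : α = fun z : ℝ => N * c + (N ^ 2 - 2 * N + 2) / (2 * (N - 1) * N) * z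
        - (N - 2) / (2 * (N - 1)) * Real.sqrt (z ^ 2 + 4 * (N - 1) * c * z) := by
      funext z; rw [hα z]
    rw [hfun]
    simpa [mul_comm, Pi.add_def, Pi.sub_def] using h4
  have hD : deriv α y = (N ^ 2 - 2 * N + 2) / (2 * (N - 1) * N)
      - (N - 2) / (2 * (N - 1)) * (1 / (2 * s) * (2 * y + 4 * (N - 1) * c)) :=
    h3.deriv
  have hs0 : s ≠ 0 := hspos.ne'
  have hN0 : N ≠ 0 := hNpos.ne'
  have hN10 : N - 1 ≠ 0 := hN1.ne'
  have key : (N - 2) * y < N * s := by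
    have hyc : 0 < y + N ^ 2 * c := by linarith
    have hsq : ((N - 2) * y) ^ 2 < (N * s) ^ 2 := by
      nlinarith [hs2, mul_pos (mul_pos hN1 hypos) hyc]
    nlinarith [mul_pos hNpos hspos, mul_pos hN2 hypos]
  have hsD : s * (y * deriv α y) = (N ^ 2 - 2 * N + 2) / (2 * (N - 1) * N) * s * y
      - (N - 2) / (2 * (N - 1)) * (y + 2 * (N - 1) * c) * y := by
    rw [hD]; field_simp; ring
  have hmain : s * (y * deriv α y - α y) = (-c) * (N * s - (N - 2) * y) := by
    rw [mul_sub, hsD, hα y, ← hsdef]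
    field_simp
    linear_combination (N * (N - 2)) * hs2
  have hpos : 0 < (-c) * (N * s - (N - 2) * y) := by
    apply mul_pos hcneg; linarith
  have h5 : 0 < s * (y * deriv α y - α y) := hmain ▸ hpos
  have h6 : 0 < y * deriv α y - α y := by
    rcases mul_pos_iff.mp h5 with ⟨_, h⟩ | ⟨h, _⟩
    · exact h
    · linarith
  linarith
end

section
/- For n ≥ 6, c < 0 and y > -n²c, one has 2y·α̊''(y) + α̊'(y) < 2(n-1)/(n(n+2)). -/
set_option maxHeartbeats 1000000

lemma keyG_stmt9 (N c y : ℝ) (hN : (6:ℝ) ≤ N) (hc : c < 0) (hy : y > -N^2*c) :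
    (N-2)^2*(N+2)^2*y^4*(y+6*(N-1)*c)^2 - (N^2-4*N+6)^2*(y^2+4*(N-1)*c*y)^3 > 0 := by
  obtain ⟨m, hmN⟩ : ∃ m : ℝ, N = m^2 + 6 := ⟨Real.sqrt (N-6), by rw [Real.sq_sqrt (by linarith)]; ring⟩
  obtain ⟨t, ht, hct⟩ : ∃ t : ℝ, 0 < t ∧ c = -t^2 :=
    ⟨Real.sqrt (-c), Real.sqrt_pos.mpr (by linarith), by rw [Real.sq_sqrt (by linarith)]; ring⟩
  obtain ⟨r, hr, hyr⟩ : ∃ r : ℝ, 0 < r ∧ y = r + (m^2+6)^2*t^2 := by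
    refine ⟨y + N^2*c, by linarith, ?_⟩
    rw [hmN, hct]; ring
  rw [hmN, hct, hyr]
  have h : (m^2+6-2)^2*(m^2+6+2)^2*(r + (m^2+6)^2*t^2)^4*((r + (m^2+6)^2*t^2)+6*((m^2+6)-1)*(-t^2))^2 - ((m^2+6)^2-4*(m^2+6)+6)^2*((r + (m^2+6)^2*t^2)^2+4*((m^2+6)-1)*(-t^2)*(r + (m^2+6)^2*t^2))^3 = 10749542400*r*t^10 + 2463436800*r^2*t^8 + 188179200*r^3*t^6 + 6580800*r^4*t^4 + 109200*r^5*t^2 + 700*r^6 + 42998169600*m^2*t^12 + 40131624960*m^2*r*t^10 + 6273054720*m^2*r^2*t^8 + 365978880*m^2*r^3*t^6 + 9745920*m^2*r^4*t^4 + 116880*m^2*r^5*t^2 + 480*m^2*r^6 + 129770864640*m^4*t^12 + 62588215296*m^4*r*t^10 + 7096764672*m^4*r^2*t^8 + 314171648*m^4*r^3*t^6 + 6169872*m^4*r^4*t^4 + 49848*m^4*r^5*t^2 + 108*m^4*r^6 + 178579759104*m^6*t^12 + 56254279680*m^6*r*t^10 + 4732865280*m^6*r^2*t^8 + 156374528*m^6*r^3*t^6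 + 2165424*m^6*r^4*t^4 + 10608*m^6*r^5*t^2 + 8*m^6*r^6 + 149048128512*m^8*t^12 + 33151908096*m^8*r*t^10 + 2074795008*m^8*r^2*t^8 + 49769504*m^8*r^3*t^6 + 455208*m^8*r^4*t^4 + 1128*m^8*r^5*t^2 + 84508545024*m^10*t^12 + 13675269888*m^10*r*t^10 + 629376000*m^10*r^2*t^8 + 10510624*m^10*r^3*t^6 + 57336*m^10*r^4*t^4 + 48*m^10*r^5*t^2 + 34499374848*m^12*t^12 + 4089601536*m^12*r*t^10 + 135059616*m^12*r^2*t^8 + 1473696*m^12*r^3*t^6 + 4008*m^12*r^4*t^4 + 10472806656*m^14*t^12 + 901713408*m^14*r*t^10 + 20532960*m^14*r^2*t^8 + 132352*m^14*r^3*t^6 + 120*m^14*r^4*t^4 + 2404373696*m^16*t^12 + 147045456*m^16*r*t^10 + 2169756*m^16*r^2*t^8 + 6912*m^16*r^3*t^6 + 419906048*m^18*t^12 + 17556048*m^18*r*t^10 + 151920*m^18*r^2*t^8 + 160*m^18*r^3*t^6 + 55556432*m^20*t^12 + 1494216*m^20*r*t^10 + 6348*m^20*r^2*t^8 + 5485168*m^22*t^12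 + 85968*m^22*r*t^10 + 120*m^22*r^2*t^8 + 392096*m^24*t^12 + 3000*m^24*r*t^10 + 19192*m^26*t^12 + 48*m^26*r*t^10 + 576*m^28*t^12 + 8*m^30*t^12 := by ring
  rw [h]
  positivity

theorem stmt_9 (n : ℕ) (hn : 6 ≤ n) (c : ℝ) (hc : c < 0) (y : ℝ) (hy : y > -(n^2 : ℝ) * c)
    (α : ℝ → ℝ)
    (hα : ∀ z : ℝ, α z = n * c + ((n^2 - 2*n + 2 : ℝ) / (2 * (n - 1) * n)) * z
      - ((n - 2 : ℝ) / (2 * (n - 1))) * Real.sqrt (z^2 + 4 * (n - 1) * c * z)) :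
    2 * y * deriv (deriv α) y + deriv α y < 2 * ((n : ℝ) - 1) / (n * (n + 2)) := by
  set N := (n:ℝ) with hNdef
  have hN6 : (6:ℝ) ≤ N := by rw [hNdef]; exact_mod_cast hn
  have hN1 : (0:ℝ) < N - 1 := by linarith
  have hN2 : (0:ℝ) < N - 2 := by linarith
  have hN0 : (0:ℝ) < N := by linarith
  have hq : ∀ z : ℝ, z > -N^2*c → 0 < z^2 + 4*(N-1)*c*z := by
    intro z hz
    have h1 : 0 < z := by nlinarith
    have h2 : 0 < z + 4*(N-1)*c := by nlinarith [sq_nonneg (N-2)]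
    nlinarith
  set A := (N^2 - 2*N + 2) / (2*(N-1)*N) with hA
  set B := (N-2)/(2*(N-1)) with hB
  have hαfun : α = fun z => N*c + A*z - B*Real.sqrt (z^2 + 4*(N-1)*c*z) := by
    funext z; rw [hα z]
  have hder : ∀ z, z > -N^2*c →
      HasDerivAt α (A - B*((z + 2*(N-1)*c)/Real.sqrt (z^2+4*(N-1)*c*z))) z := by
    intro z hz
    have hqz := hq z hz
    have hsz : 0 < Real.sqrt (z^2+4*(N-1)*c*z) := Real.sqrt_pos.mpr hqz
    have h1 : HasDerivAt (fun w : ℝ => w^2 + 4*(N-1)*c*w) (2*z + 4*(N-1)*c) z := by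
      have : HasDerivAt (fun w : ℝ => w^2 + 4*(N-1)*c*w) _ z := ((hasDerivAt_pow 2 z).add ((hasDerivAt_id z).const_mul (4*(N-1)*c)))
      convert this using 1; push_cast; ring
    have h2 : HasDerivAt (fun w : ℝ => Real.sqrt (w^2+4*(N-1)*c*w))
        ((2*z+4*(N-1)*c)/(2*Real.sqrt (z^2+4*(N-1)*c*z))) z := h1.sqrt (ne_of_gt hqz)
    have h3 : HasDerivAt (fun w : ℝ => N*c + A*w - B*Real.sqrt (w^2+4*(N-1)*c*w))
        (0 + A*1 - B*((2*z+4*(N-1)*c)/(2*Real.sqrt (z^2+4*(N-1)*c*z)))) z :=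
      ((hasDerivAt_const z (N*c)).add ((hasDerivAt_id z).const_mul A)).sub (h2.const_mul B)
    rw [hαfun]
    convert h3 using 1
    field_simp
    ring
  have hyU : y ∈ Set.Ioi (-N^2*c) := hy
  have hev : deriv α =ᶠ[nhds y]
      (fun z => A - B*((z + 2*(N-1)*c)/Real.sqrt (z^2+4*(N-1)*c*z))) := by
    filter_upwards [(isOpen_Ioi).mem_nhds hyU] with z hz
    exact (hder z hz).deriv
  have hd1 : deriv α y = A - B*((y + 2*(N-1)*c)/Real.sqrt (y^2+4*(N-1)*c*y)) :=
    (hder y hy).deriv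
  have hqy := hq y hy
  set s := Real.sqrt (y^2+4*(N-1)*c*y) with hsdef
  have hs : 0 < s := Real.sqrt_pos.mpr hqy
  have hsne : s ≠ 0 := ne_of_gt hs
  have hsq : s^2 = y^2+4*(N-1)*c*y := Real.sq_sqrt hqy.le
  have hs3 : 0 < s^3 := by positivity
  have h1 : HasDerivAt (fun w : ℝ => w^2 + 4*(N-1)*c*w) (2*y + 4*(N-1)*c) y := by
    have : HasDerivAt (fun w : ℝ => w^2 + 4*(N-1)*c*w) _ y := ((hasDerivAt_pow 2 y).add ((hasDerivAt_id y).const_mul (4*(N-1)*c)))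
    convert this using 1; push_cast; ring
  have h2 : HasDerivAt (fun w : ℝ => Real.sqrt (w^2+4*(N-1)*c*w))
      ((2*y+4*(N-1)*c)/(2*s)) y := h1.sqrt (ne_of_gt hqy)
  have hnum : HasDerivAt (fun w : ℝ => w + 2*(N-1)*c) 1 y := by
    simpa using (hasDerivAt_id y).add_const (2*(N-1)*c)
  have hdiv : HasDerivAt (fun z => (z + 2*(N-1)*c)/Real.sqrt (z^2+4*(N-1)*c*z))
      ((1*s - (y + 2*(N-1)*c)*((2*y+4*(N-1)*c)/(2*s)))/s^2) y :=
    hnum.div h2 hsne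
  have hφ : HasDerivAt (fun z => A - B*((z + 2*(N-1)*c)/Real.sqrt (z^2+4*(N-1)*c*z)))
      (0 - B*((1*s - (y + 2*(N-1)*c)*((2*y+4*(N-1)*c)/(2*s)))/s^2)) y :=
    (hasDerivAt_const y A).sub (hdiv.const_mul B)
  have hd2 : deriv (deriv α) y
      = 0 - B*((1*s - (y + 2*(N-1)*c)*((2*y+4*(N-1)*c)/(2*s)))/s^2) := by
    rw [hev.deriv_eq]; exact hφ.deriv
  -- inequality part
  have key := keyG_stmt9 N c y hN6 hc hy
  have hy0 : 0 < y := by nlinarith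
  have hy6 : 0 < y + 6*(N-1)*c := by nlinarith
  have hDB : (N^2-4*N+6)/(2*(N-1)*(N+2))*s^3 < (N-2)/(2*(N-1))*(y^2*(y+6*(N-1)*c)) := by
    rw [div_mul_eq_mul_div, div_mul_eq_mul_div, div_lt_div_iff₀ (by positivity) (by positivity)]
    refine lt_of_pow_lt_pow_left₀ 2 (by positivity) ?_
    have hs6 : (s^3)^2 = (y^2+4*(N-1)*c*y)^3 := by
      rw [show (s^3)^2 = (s^2)^3 from by ring, hsq]
    rw [show ((N^2-4*N+6)*s^3*(2*(N-1)))^2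
        = (N^2-4*N+6)^2*((s^3)^2)*(4*(N-1)^2) from by ring, hs6]
    nlinarith [mul_pos key (show (0:ℝ) < 4*(N-1)^2 by positivity)]
  rw [hd2, hd1]
  have e1 : (1*s - (y + 2*(N-1)*c)*((2*y+4*(N-1)*c)/(2*s)))/s^2
      = (s^2 - (y + 2*(N-1)*c)^2)/s^3 := by field_simp; ring
  have e2 : s^2 - (y + 2*(N-1)*c)^2 = -(4*(N-1)^2*c^2) := by rw [hsq]; ring
  have e3 : (y + 2*(N-1)*c)/s = (y + 2*(N-1)*c)*(y^2+4*(N-1)*c*y)/s^3 := by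
    rw [← hsq]; field_simp
  rw [e1, e2, e3, hA, hB]
  have hmain : 2*y*(0 - (N-2)/(2*(N-1))*(-(4*(N-1)^2*c^2)/s^3)) +
      ((N^2 - 2*N + 2) / (2*(N-1)*N) - (N-2)/(2*(N-1))*((y + 2*(N-1)*c)*(y^2+4*(N-1)*c*y)/s^3))
      - 2*(N-1)/(N*(N+2))
      = ((N^2-4*N+6)/(2*(N-1)*(N+2))*s^3 - (N-2)/(2*(N-1))*(y^2*(y+6*(N-1)*c)))/s^3 := by
    field_simp
    ring
  have hneg : ((N^2-4*N+6)/(2*(N-1)*(N+2))*s^3 - (N-2)/(2*(N-1))*(y^2*(y+6*(N-1)*c)))/s^3 < 0 :=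
    div_neg_of_neg_of_pos (by linarith) hs3
  linarith
end

section
/- For n ≥ 6, c < 0 and y > -n²c, one has 2 + (-1/n + α̊'(y))·(y/α̊(y)) < 0 and 1 - (α̊'(y)/α̊(y))·y < 0. -/
theorem aux_pos_stmt11 (m t u : ℝ) (hm : 0 ≤ m) (ht : 0 < t) (hu : 0 < u) :
    0 < 4*u^2 + 488*(t*u) + 5184*t^2 + m*(2*u^2 + 300*(t*u) + 5328*t^2)
      + m^2*(60*(t*u) + 2208*t^2) + m^3*(4*(t*u) + 460*t^2) + m^4*(48*t^2) + m^5*(2*t^2) := by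
  have p0 : 0 < 4*u^2 + 488*(t*u) + 5184*t^2 := by positivity
  have p1 : 0 ≤ m*(2*u^2 + 300*(t*u) + 5328*t^2) := mul_nonneg hm (by positivity)
  have p2 : 0 ≤ m^2*(60*(t*u) + 2208*t^2) := mul_nonneg (by positivity) (by positivity)
  have p3 : 0 ≤ m^3*(4*(t*u) + 460*t^2) := mul_nonneg (pow_nonneg hm 3) (by positivity)
  have p4 : 0 ≤ m^4*(48*t^2) := mul_nonneg (by positivity) (by positivity)
  have p5 : 0 ≤ m^5*(2*t^2) := mul_nonneg (pow_nonneg hm 5) (by positivity)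
  linarith

set_option maxHeartbeats 1000000 in
theorem stmt_11 (n : ℕ) (hn : 6 ≤ n) (c : ℝ) (hc : c < 0) (y : ℝ) (hy : y > -(n^2 : ℝ) * c)
    (α : ℝ → ℝ)
    (hα : ∀ z : ℝ, α z = n * c + ((n^2 - 2*n + 2 : ℝ) / (2 * (n - 1) * n)) * z
      - ((n - 2 : ℝ) / (2 * (n - 1))) * Real.sqrt (z^2 + 4 * (n - 1) * c * z)) :
    2 + (-(1 / (n : ℝ)) + deriv α y) * (y / α y) < 0 ∧
    1 - deriv α y / α y * y < 0 := by
  have hN6 : (6:ℝ) ≤ (n:ℝ) := by exact_mod_cast hn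
  set N : ℝ := (n:ℝ) with hNdef
  have hN0 : (0:ℝ) < N := by linarith
  have hN1 : (1:ℝ) < N := by linarith
  have hcneg : 0 < -c := by linarith
  have hyc : 0 < y + N^2*c := by
    have : y > -(N^2) * c := hy
    linarith
  have hy0 : 0 < y := by nlinarith [mul_pos (mul_pos hN0 hN0) hcneg]
  have h4 : 0 < y + 4*(N-1)*c := by nlinarith [mul_pos hcneg hcneg]
  have h2c : 0 < y + 2*(N-1)*c := by nlinarith [mul_pos hcneg hcneg]
  have hupos : 0 < y^2 + 4*(N-1)*c*y := by nlinarith [mul_pos hy0 h4]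
  set s : ℝ := Real.sqrt (y^2 + 4*(N-1)*c*y) with hsdef
  have hspos : 0 < s := Real.sqrt_pos.mpr hupos
  have hsne : s ≠ 0 := ne_of_gt hspos
  have hs2 : s^2 = y^2 + 4*(N-1)*c*y := Real.sq_sqrt hupos.le
  have hsle : s ≤ y + 2*(N-1)*c := by
    rw [hsdef]
    calc Real.sqrt (y^2 + 4*(N-1)*c*y) ≤ Real.sqrt ((y+2*(N-1)*c)^2) := by
          apply Real.sqrt_le_sqrt; nlinarith [sq_nonneg (2*(N-1)*c)]
      _ = y+2*(N-1)*c := Real.sqrt_sq h2c.le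
  have hNs : (N-2)*y < N*s := by
    nlinarith [hs2, mul_pos hN0 hspos, mul_pos (show (0:ℝ) < N-1 by linarith) (mul_pos hy0 hyc)]
  -- derivative
  have hα_fun : α = fun z => N*c + ((N^2-2*N+2)/(2*(N-1)*N))*z
      - ((N-2)/(2*(N-1)))*Real.sqrt (z^2+4*(N-1)*c*z) := funext hα
  have h1d : HasDerivAt (fun z:ℝ => z^2 + 4*(N-1)*c*z) (2*y+4*(N-1)*c) y := by
    have h := (hasDerivAt_pow 2 y).add ((hasDerivAt_id y).const_mul (4*(N-1)*c))
    refine h.congr_deriv ?_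
    push_cast; ring
  have h2d : HasDerivAt (fun z:ℝ => Real.sqrt (z^2+4*(N-1)*c*z))
      (1/(2*s) * (2*y+4*(N-1)*c)) y := by
    have hne : y^2+4*(N-1)*c*y ≠ 0 := ne_of_gt hupos
    have h := (Real.hasDerivAt_sqrt hne).comp y h1d
    exact h
  have hds : HasDerivAt α
      ((N^2-2*N+2)/(2*(N-1)*N) - (N-2)/(2*(N-1)) * (1/(2*s) * (2*y+4*(N-1)*c))) y := by
    rw [hα_fun]
    have h := ((hasDerivAt_const y (N*c)).add
        ((hasDerivAt_id y).const_mul ((N^2-2*N+2)/(2*(N-1)*N)))).sub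
        (h2d.const_mul ((N-2)/(2*(N-1))))
    refine h.congr_deriv ?_
    ring
  have hD : deriv α y = (N^2-2*N+2)/(2*(N-1)*N) - (N-2)/(2*(N-1)) * (1/(2*s) * (2*y+4*(N-1)*c)) :=
    hds.deriv
  have hαy : α y = N*c + ((N^2-2*N+2)/(2*(N-1)*N))*y - ((N-2)/(2*(N-1)))*s := by
    rw [hα y]
  set a := α y with ha
  set d := deriv α y with hd
  have hN1' : N - 1 ≠ 0 := by intro h; nlinarith
  have hNne : N ≠ 0 := ne_of_gt hN0
  -- positivity of alpha
  have hApos : 0 < ((N^2-2*N+2)/(2*(N-1)*N))*y + N*c := by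
    rw [show ((N^2-2*N+2)/(2*(N-1)*N))*y + N*c = ((N^2-2*N+2)*y + 2*(N-1)*N^2*c)/(2*(N-1)*N) by
      field_simp]
    apply div_pos _ (by nlinarith)
    nlinarith [mul_pos (show (0:ℝ) < N^2-2*N+2 by nlinarith) hyc,
      mul_nonneg (mul_nonneg (sq_nonneg N) hcneg.le) (sq_nonneg (N-2))]
  have hfpos : 0 < ((N^2-2*N+2)/(2*(N-1)*N))*y + N*c + ((N-2)/(2*(N-1)))*s := by
    have : 0 < ((N-2)/(2*(N-1)))*s := by
      apply mul_pos (div_pos (by linarith) (by linarith)) hspos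
    linarith
  have hkey : a * (((N^2-2*N+2)/(2*(N-1)*N))*y + N*c + ((N-2)/(2*(N-1)))*s) = (y/N + N*c)^2 := by
    rw [hαy]
    field_simp
    linear_combination (-(N*(N-2))^2) * hs2
  have hw : 0 < y/N + N*c := by
    rw [show y/N + N*c = (y + N^2*c)/N by field_simp]
    exact div_pos hyc hN0
  have hapos : 0 < a := by nlinarith [hkey, hfpos, pow_pos hw 2]
  -- second inequality core
  have hrel2 : (d*y - a)*s = (-c)*(N*s - (N-2)*y) := by
    rw [hD, hαy]
    field_simp
    linear_combination (2*N*(N-2)) * hs2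
  have h2' : a < d*y := by
    nlinarith [hrel2, mul_pos hcneg (sub_pos.mpr hNs), hspos]
  -- first inequality core
  have h3pos : 0 < 3*y + 10*(N-1)*c := by
    nlinarith [mul_pos hcneg (show (0:ℝ) < 3*N^2-10*N+10 by nlinarith)]
  have hT : (4*N^2*(N-1)*c + (3*N^2-8*N+8)*y)*s - N*(N-2)*(3*y^2+10*(N-1)*c*y) < 0 := by
    rcases le_or_gt (4*N^2*(N-1)*c + (3*N^2-8*N+8)*y) 0 with hM|hM
    · nlinarith [mul_nonpos_of_nonpos_of_nonneg hM hspos.le,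
        mul_pos (mul_pos (mul_pos hN0 (show (0:ℝ) < N-2 by linarith)) hy0) h3pos]
    · have hMs : (4*N^2*(N-1)*c + (3*N^2-8*N+8)*y)*s
          ≤ (4*N^2*(N-1)*c + (3*N^2-8*N+8)*y)*(y + 2*(N-1)*c) :=
        mul_le_mul_of_nonneg_left hsle hM.le
      have haux := aux_pos_stmt11 (N-6) (-c) (y+N^2*c) (by linarith) hcneg hyc
      have hexp : (4*N^2*(N-1)*c + (3*N^2-8*N+8)*y)*(y + 2*(N-1)*c)
            - N*(N-2)*(3*y^2+10*(N-1)*c*y)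
          = -(4*(y+N^2*c)^2 + 488*((-c)*(y+N^2*c)) + 5184*(-c)^2
            + (N-6)*(2*(y+N^2*c)^2 + 300*((-c)*(y+N^2*c)) + 5328*(-c)^2)
            + (N-6)^2*(60*((-c)*(y+N^2*c)) + 2208*(-c)^2)
            + (N-6)^3*(4*((-c)*(y+N^2*c)) + 460*(-c)^2)
            + (N-6)^4*(48*(-c)^2) + (N-6)^5*(2*(-c)^2)) := by ring
      linarith [hMs, haux, hexp]
  have hrel1 : (2*(N-1)*N) * ((2*a + (-(1/N) + d)*y)*s)
      = (4*N^2*(N-1)*c + (3*N^2-8*N+8)*y)*s - N*(N-2)*(3*y^2+10*(N-1)*c*y) := by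
    rw [hD, hαy]
    field_simp
    linear_combination (-4*N*(N-2)) * hs2
  have hG : (0:ℝ) < 2*(N-1)*N := mul_pos (mul_pos two_pos (by linarith : (0:ℝ) < N-1)) hN0
  have hGX : (2*(N-1)*N) * ((2*a + (-(1/N) + d)*y)*s) < 0 := by rw [hrel1]; exact hT
  have hXs : (2*a + (-(1/N) + d)*y)*s < 0 := by
    by_contra hcon
    push_neg at hcon
    exact absurd hGX (not_lt.mpr (mul_nonneg hG.le hcon))
  have h1 : 2*a + (-(1/N) + d)*y < 0 := by
    by_contra hcon
    push_neg at hcon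
    exact absurd hXs (not_lt.mpr (mul_nonneg hcon hspos.le))
  constructor
  · have heq : 2 + (-(1/N) + d)*(y/a) = (2*a + (-(1/N)+d)*y)/a := by
      field_simp
      try ring
    rw [heq]
    exact div_neg_of_neg_of_pos h1 hapos
  · have heq : 1 - d/a*y = (a - d*y)/a := by
      field_simp
      try ring
    rw [heq]
    exact div_neg_of_neg_of_pos (by linarith) hapos
end

section
/- For n ≥ 6, c < 0 and y > -n²c, one has (y/n + nc)·(1 - α̊'(y)·y/α̊(y)) = ((n-2)y/√(y² + 4(n-1)cy) + n)·c, and this quantity is less than (2n-2)c. -/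
set_option maxHeartbeats 1000000

theorem stmt_12 (n : ℕ) (hn : 6 ≤ n) (c : ℝ) (hc : c < 0) (y : ℝ) (hy : y > -(n^2 : ℝ) * c)
    (α : ℝ → ℝ)
    (hα : ∀ z : ℝ, α z = n * c + ((n^2 - 2*n + 2 : ℝ) / (2 * (n - 1) * n)) * z
      - ((n - 2 : ℝ) / (2 * (n - 1))) * Real.sqrt (z^2 + 4 * (n - 1) * c * z)) :
    (y / n + n * c) * (1 - deriv α y * y / α y)
      = (((n : ℝ) - 2) * y / Real.sqrt (y^2 + 4 * (n - 1) * c * y) + n) * c ∧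
    (y / n + n * c) * (1 - deriv α y * y / α y) < (2 * (n : ℝ) - 2) * c := by
  have hN6 : (6:ℝ) ≤ (n:ℝ) := by exact_mod_cast hn
  set N : ℝ := (n:ℝ) with hNdef
  have hN0 : 0 < N := by linarith
  have hN1 : (0:ℝ) < N - 1 := by linarith
  have hN2 : (0:ℝ) < N - 2 := by linarith
  have hNne : N ≠ 0 := hN0.ne'
  have hN1ne : N - 1 ≠ 0 := hN1.ne'
  have hcneg : 0 < -c := neg_pos.mpr hc
  have hy0 : 0 < y := by nlinarith [mul_pos (mul_pos hN0 hN0) hcneg]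
  have h1 : 0 < y + 4*(N-1)*c := by nlinarith [mul_pos (mul_pos hN2 hN2) hcneg]
  have hq : 0 < y^2 + 4*(N-1)*c*y := by nlinarith [mul_pos hy0 h1]
  set s := Real.sqrt (y^2 + 4*(N-1)*c*y) with hsdef
  have hs0 : 0 < s := Real.sqrt_pos.mpr hq
  have hs2 : s^2 = y^2 + 4*(N-1)*c*y := Real.sq_sqrt hq.le
  have hsy : s < y := by nlinarith [mul_pos (mul_pos hN1 hcneg) hy0]
  -- derivative
  have hf : HasDerivAt (fun z : ℝ => z^2 + 4*(N-1)*c*z) (2*y + 4*(N-1)*c) y := by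
    have h1 : HasDerivAt (fun z:ℝ => z^2) (2*y) y := by simpa using hasDerivAt_pow 2 y
    have h2 : HasDerivAt (fun z:ℝ => 4*(N-1)*c*z) (4*(N-1)*c) y :=
      by simpa using (hasDerivAt_id y).const_mul (4*(N-1)*c)
    exact h1.add h2
  have hsq : HasDerivAt (fun z:ℝ => Real.sqrt (z^2+4*(N-1)*c*z)) ((2*y+4*(N-1)*c)/(2*s)) y := by
    simpa using hf.sqrt hq.ne'
  have hαfun : α = fun z => N*c + ((N^2-2*N+2)/(2*(N-1)*N))*z
      - ((N-2)/(2*(N-1)))*Real.sqrt (z^2+4*(N-1)*c*z) := funext hα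
  have hder : HasDerivAt α ((N^2-2*N+2)/(2*(N-1)*N)
      - ((N-2)/(2*(N-1)))*((2*y+4*(N-1)*c)/(2*s))) y := by
    rw [hαfun]
    have := ((hasDerivAt_const y (N*c)).add
      ((hasDerivAt_id y).const_mul ((N^2-2*N+2)/(2*(N-1)*N)))).sub
      (hsq.const_mul ((N-2)/(2*(N-1))))
    exact this.congr_deriv (by ring)
  have hD : deriv α y = (N^2-2*N+2)/(2*(N-1)*N)
      - ((N-2)/(2*(N-1)))*((2*y+4*(N-1)*c)/(2*s)) := hder.deriv
  -- value of α y in cleared form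
  have hαval : α y = (2*(N-1)*N^2*c + (N^2-2*N+2)*y - N*(N-2)*s) / (2*(N-1)*N) := by
    rw [hα y, ← hsdef]; field_simp
  -- key identity
  have key2 : 2*(N-1)*(y + N^2*c) * (N*s - (N-2)*y)
      = (N*s + (N-2)*y) * (2*(N-1)*N^2*c + (N^2-2*N+2)*y - N*(N-2)*s) := by
    linear_combination (N^2*(N-2)) * hs2
  -- positivity of α y
  have hfac1 : 0 < y + N^2*c := by nlinarith
  have hfac2 : 0 < N*s - (N-2)*y := by
    nlinarith [mul_pos (mul_pos (mul_pos hN1 hy0) hfac1) (by norm_num : (0:ℝ) < 4),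
      mul_pos hN0 hs0, mul_pos hN2 hy0]
  have hfac3 : 0 < N*s + (N-2)*y := by positivity
  have hC : 0 < 2*(N-1)*N^2*c + (N^2-2*N+2)*y - N*(N-2)*s := by
    by_contra h
    push_neg at h
    have hP : 0 < 2*(N-1)*(y + N^2*c) * (N*s - (N-2)*y) := by
      have := mul_pos (mul_pos (mul_pos (by linarith : (0:ℝ) < 2) hN1) hfac1) hfac2
      nlinarith [this]
    rw [key2] at hP
    nlinarith [mul_nonpos_of_nonneg_of_nonpos hfac3.le h]
  have hαpos : 0 < α y := by
    rw [hαval]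
    exact div_pos hC (by positivity)
  have hαne : α y ≠ 0 := hαpos.ne'
  -- main equality
  have heq : (y / N + N * c) * (1 - deriv α y * y / α y) = ((N - 2) * y / s + N) * c := by
    rw [hD, hαval]
    rw [hαval] at hαne
    have hCne : N ^ 2 * c * 2 * (N - 1) + y * (N * (N - 2) + 2) - N * (N - 2) * s ≠ 0 := by
      have := hC.ne'; contrapose! this; linear_combination this
    field_simp
    ring_nf
    linear_combination (norm := ring_nf) (-2*N*(N-2)*y) * hs2
  refine ⟨heq, ?_⟩
  rw [heq]
  have hdiv : 1 < y / s := (one_lt_div hs0).mpr hsy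
  have : 2*N - 2 < (N-2)*y/s + N := by
    have h2 : (N-2) < (N-2)*(y/s) := by nlinarith
    calc 2*N-2 = (N-2) + N := by ring
    _ < (N-2)*(y/s) + N := by linarith
    _ = (N-2)*y/s + N := by ring
  nlinarith [this, hc]
end

section
/- Let λ, μ > 0 with λμ = -c and λ > √(-c), where c < 0, and let n ≥ 3. Then setting |H| = (n-1)λ + μ and |h|² = (n-1)λ² + μ², one has |H| > n√(-c) and (n-1)λ² + μ² = nc + n|H|²/(2(n-1)) - ((n-2)/(2(n-1)))·√(|H|⁴ + 4(n-1)c|H|²). -/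
theorem stmt_14 (n : ℕ) (hn : 3 ≤ n) (c : ℝ) (hc : c < 0) (lam mu : ℝ)
    (hlam : 0 < lam) (hmu : 0 < mu) (hprod : lam * mu = -c)
    (hbig : lam > Real.sqrt (-c)) :
    ((n : ℝ) - 1) * lam + mu > n * Real.sqrt (-c) ∧
    ((n : ℝ) - 1) * lam^2 + mu^2
      = n * c + (n / (2 * ((n : ℝ) - 1))) * (((n : ℝ) - 1) * lam + mu)^2
        - (((n : ℝ) - 2) / (2 * ((n : ℝ) - 1))) *
          Real.sqrt ((((n : ℝ) - 1) * lam + mu)^4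
            + 4 * ((n : ℝ) - 1) * c * (((n : ℝ) - 1) * lam + mu)^2) := by
  set s := Real.sqrt (-c) with hs
  have hs0 : 0 ≤ s := Real.sqrt_nonneg _
  have hs2 : s ^ 2 = lam * mu := by
    rw [hs, Real.sq_sqrt (by linarith)]; linarith
  have hn3 : (3 : ℝ) ≤ (n : ℝ) := by exact_mod_cast hn
  have hsum : lam + mu ≥ 2 * s := by
    nlinarith [sq_nonneg (lam - mu), sq_nonneg (lam + mu - 2 * s)]
  have hlm : lam > mu := by nlinarith
  have hkey : ((n : ℝ) - 1) * lam - mu > 0 := by nlinarith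
  have hH : ((n : ℝ) - 1) * lam + mu > 0 := by nlinarith
  constructor
  · nlinarith
  · have hc' : c = -(lam * mu) := by linarith
    have hinner : (((n : ℝ) - 1) * lam + mu)^4
        + 4 * ((n : ℝ) - 1) * c * (((n : ℝ) - 1) * lam + mu)^2
        = ((((n : ℝ) - 1) * lam + mu) * (((n : ℝ) - 1) * lam - mu))^2 := by
      rw [hc']; ring
    rw [hinner, Real.sqrt_sq (by positivity)]
    have hne : (2 : ℝ) * ((n : ℝ) - 1) ≠ 0 := by nlinarith
    rw [hc']
    have hne1 : (n : ℝ) - 1 ≠ 0 := by linarith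
    field_simp
    ring
end

section
/- For n = 5 and c < 0, the function β̊(x) = β(x) - x/5, where β(x) = (5/11)c + (15/88)x + (√7/88)·√(7x² + 272cx + 4000c²), satisfies max{x/20 + 2c, 0} < β̊(x) for all x > -25c. -/
theorem stmt_18 (c : ℝ) (hc : c < 0) (x : ℝ) (hx : x > -25 * c) :
    max (x / 20 + 2 * c) 0 <
      ((5:ℝ)/11 * c + (15:ℝ)/88 * x
        + Real.sqrt 7 / 88 * Real.sqrt (7 * x^2 + 272 * c * x + 4000 * c^2)) - x / 5 := by
  have hc2 : 0 < c * c := mul_pos_of_neg_of_neg hc hc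
  have hQ : 0 < 7 * x^2 + 272 * c * x + 4000 * c^2 := by
    nlinarith [sq_nonneg (7*x + 136*c)]
  have hs : Real.sqrt 7 * Real.sqrt (7 * x^2 + 272 * c * x + 4000 * c^2)
      = Real.sqrt (7 * (7 * x^2 + 272 * c * x + 4000 * c^2)) :=
    (Real.sqrt_mul (by norm_num) _).symm
  set s := Real.sqrt (7 * (7 * x^2 + 272 * c * x + 4000 * c^2)) with hsdef
  have hs0 : 0 ≤ s := Real.sqrt_nonneg _
  have hs2 : s^2 = 7 * (7 * x^2 + 272 * c * x + 4000 * c^2) :=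
    Real.sq_sqrt (by positivity)
  have key : Real.sqrt 7 / 88 * Real.sqrt (7 * x^2 + 272 * c * x + 4000 * c^2) = s / 88 := by
    rw [div_mul_eq_mul_div, hs]
  rw [key, max_lt_iff]
  constructor
  · nlinarith [hs2, hs0, sq_nonneg (s - (7*x + 136*c)), sq_nonneg (s + 7*x + 136*c), hc2]
  · have hx25 : 0 < x + 25 * c := by linarith
    nlinarith [hs2, hs0, sq_nonneg (s - (13*x - 200*c)), sq_nonneg (s + 13*x - 200*c),
      mul_pos hx25 hx25]
end

section
/- For n = 5 and c < 0, the function β̊(x) = β(x) - x/5 satisfies 2x·β̊''(x) + β̊'(x) < 8/35 for all x > -25c. -/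
theorem stmt_19 (c : ℝ) (hc : c < 0) (x : ℝ) (hx : x > -25 * c)
    (β : ℝ → ℝ)
    (hβ : ∀ z : ℝ, β z = (5:ℝ)/11 * c + (15:ℝ)/88 * z
      + Real.sqrt 7 / 88 * Real.sqrt (7 * z^2 + 272 * c * z + 4000 * c^2) - z / 5) :
    2 * x * deriv (deriv β) x + deriv β x < 8 / 35 := by
  have hβfun : β = fun z : ℝ => (5:ℝ)/11 * c + (15:ℝ)/88 * z
      + Real.sqrt 7 / 88 * Real.sqrt (7 * z^2 + 272 * c * z + 4000 * c^2) - z / 5 := funext hβ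
  subst hβfun
  have hQpos : ∀ z : ℝ, 0 < 7 * z^2 + 272 * c * z + 4000 * c^2 := by
    intro z
    nlinarith [sq_nonneg (7*z + 136*c), mul_pos_of_neg_of_neg hc hc]
  have hQd : ∀ z : ℝ, HasDerivAt (fun z : ℝ => 7 * z^2 + 272 * c * z + 4000 * c^2)
      (14 * z + 272 * c) z := by
    intro z
    have h := (((hasDerivAt_pow 2 z).const_mul (7:ℝ)).add
      ((hasDerivAt_id' z).const_mul (272*c))).add_const (4000*c^2)
    refine h.congr_deriv ?_
    push_cast; ring
  have hsd : ∀ z : ℝ, HasDerivAt (fun y : ℝ => Real.sqrt (7 * y^2 + 272 * c * y + 4000 * c^2))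
      ((14 * z + 272 * c) / (2 * Real.sqrt (7 * z^2 + 272 * c * z + 4000 * c^2))) z :=
    fun z => (hQd z).sqrt (ne_of_gt (hQpos z))
  have hβd : ∀ z : ℝ, HasDerivAt (fun z : ℝ => (5:ℝ)/11 * c + (15:ℝ)/88 * z
      + Real.sqrt 7 / 88 * Real.sqrt (7 * z^2 + 272 * c * z + 4000 * c^2) - z / 5)
      (-13/440 + Real.sqrt 7 / 88 * ((14 * z + 272 * c) / (2 * Real.sqrt (7 * z^2 + 272 * c * z + 4000 * c^2)))) z := by
    intro z
    have h := (((hasDerivAt_const z ((5:ℝ)/11*c)).add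
        ((hasDerivAt_id' z).const_mul ((15:ℝ)/88))).add
        ((hsd z).const_mul (Real.sqrt 7 / 88))).sub
        ((hasDerivAt_id' z).div_const 5)
    refine h.congr_deriv ?_
    ring
  have hderivβ : deriv (fun z : ℝ => (5:ℝ)/11 * c + (15:ℝ)/88 * z
      + Real.sqrt 7 / 88 * Real.sqrt (7 * z^2 + 272 * c * z + 4000 * c^2) - z / 5)
      = fun z : ℝ => -13/440 + Real.sqrt 7 / 88 * ((14 * z + 272 * c) / (2 * Real.sqrt (7 * z^2 + 272 * c * z + 4000 * c^2))) :=
    funext fun z => (hβd z).deriv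
  have hs0 : 0 < Real.sqrt (7 * x^2 + 272 * c * x + 4000 * c^2) := Real.sqrt_pos.2 (hQpos x)
  have hsq : (Real.sqrt (7 * x^2 + 272 * c * x + 4000 * c^2)) ^ 2 = 7 * x^2 + 272 * c * x + 4000 * c^2 :=
    Real.sq_sqrt (hQpos x).le
  -- second derivative
  have hnum : HasDerivAt (fun z : ℝ => 14 * z + 272 * c) 14 x := by
    have h := ((hasDerivAt_id' x).const_mul (14:ℝ)).add_const (272*c)
    refine h.congr_deriv ?_; ring
  have hden : HasDerivAt (fun z : ℝ => 2 * Real.sqrt (7 * z^2 + 272 * c * z + 4000 * c^2))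
      (2 * ((14 * x + 272 * c) / (2 * Real.sqrt (7 * x^2 + 272 * c * x + 4000 * c^2)))) x :=
    (hsd x).const_mul 2
  have hdiv := hnum.div hden (by positivity)
  have hg2 : HasDerivAt (deriv (fun z : ℝ => (5:ℝ)/11 * c + (15:ℝ)/88 * z
      + Real.sqrt 7 / 88 * Real.sqrt (7 * z^2 + 272 * c * z + 4000 * c^2) - z / 5))
      (Real.sqrt 7 / 88 * ((14 * (2 * Real.sqrt (7 * x^2 + 272 * c * x + 4000 * c^2))
        - (14 * x + 272 * c) * (2 * ((14 * x + 272 * c) / (2 * Real.sqrt (7 * x^2 + 272 * c * x + 4000 * c^2)))))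
        / (2 * Real.sqrt (7 * x^2 + 272 * c * x + 4000 * c^2))^2)) x := by
    rw [hderivβ]
    exact (hdiv.const_mul (Real.sqrt 7 / 88)).const_add (-13/440)
  have hD2 := hg2.deriv
  have hD1 := (hβd x).deriv
  rw [hD2, hD1]
  -- key inequality (polynomial part)
  have hd : 0 < x + 25 * c := by linarith
  have he : 0 < -c := by linarith
  have hA : 0 < 665280 * c^2 * x + 35 * (7*x + 136*c) * (7 * x^2 + 272 * c * x + 4000 * c^2) := by
    nlinarith [mul_pos (mul_pos he he) (by linarith : (0:ℝ) < x),
      mul_pos (by linarith : (0:ℝ) < 7*x + 136*c) (hQpos x)]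
  have hpoly : 7 * (665280 * c^2 * x + 35 * (7*x + 136*c) * (7 * x^2 + 272 * c * x + 4000 * c^2))^2
      < 632025 * (7 * x^2 + 272 * c * x + 4000 * c^2)^3 := by
    nlinarith [mul_pos hd (pow_pos he 5), mul_pos (pow_pos hd 2) (pow_pos he 4),
      mul_pos (pow_pos hd 3) (pow_pos he 3), mul_pos (pow_pos hd 4) (pow_pos he 2),
      mul_pos (pow_pos hd 5) he, pow_pos hd 6]
  have hsqrtA : Real.sqrt 7 * (665280 * c^2 * x + 35 * (7*x + 136*c) * (7 * x^2 + 272 * c * x + 4000 * c^2))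
      < 795 * (7 * x^2 + 272 * c * x + 4000 * c^2) * Real.sqrt (7 * x^2 + 272 * c * x + 4000 * c^2) := by
    have h1 : Real.sqrt 7 * (665280 * c^2 * x + 35 * (7*x + 136*c) * (7 * x^2 + 272 * c * x + 4000 * c^2))
        = Real.sqrt (7 * (665280 * c^2 * x + 35 * (7*x + 136*c) * (7 * x^2 + 272 * c * x + 4000 * c^2))^2) := by
      rw [Real.sqrt_mul (by norm_num), Real.sqrt_sq hA.le]
    have h2 := Real.sqrt_lt_sqrt (by positivity) hpoly
    have h3 : Real.sqrt (632025 * (7 * x^2 + 272 * c * x + 4000 * c^2)^3)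
        = 795 * (7 * x^2 + 272 * c * x + 4000 * c^2) * Real.sqrt (7 * x^2 + 272 * c * x + 4000 * c^2) := by
      rw [show (632025:ℝ) * (7 * x^2 + 272 * c * x + 4000 * c^2)^3
          = (795 * (7 * x^2 + 272 * c * x + 4000 * c^2))^2 * (7 * x^2 + 272 * c * x + 4000 * c^2) by ring,
        Real.sqrt_mul (by positivity), Real.sqrt_sq (by nlinarith [hQpos x])]
    rw [h1, ← h3]
    exact h2
  -- make the square root opaque
  obtain ⟨s, hs_def⟩ : ∃ t, Real.sqrt (7 * x^2 + 272 * c * x + 4000 * c^2) = t := ⟨_, rfl⟩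
  rw [hs_def] at hs0 hsq hsqrtA ⊢
  have hsqrtA' : Real.sqrt 7 * (665280 * c^2 * x + 35 * (7*x + 136*c) * s^2) < 795 * s^2 * s := by
    rw [hsq]
    calc Real.sqrt 7 * (665280 * c^2 * x + 35 * (7*x + 136*c) * (7 * x^2 + 272 * c * x + 4000 * c^2))
        < 795 * (7 * x^2 + 272 * c * x + 4000 * c^2) * s := hsqrtA
      _ = 795 * (7 * x^2 + 272 * c * x + 4000 * c^2) * s := rfl
  have hP2 : (14 * x + 272 * c)^2 = 28 * s^2 - 38016 * c^2 := by rw [hsq]; ring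
  have hsne : s ≠ 0 := ne_of_gt hs0
  have heq : 2 * x * (Real.sqrt 7 / 88 * ((14 * (2 * s)
        - (14 * x + 272 * c) * (2 * ((14 * x + 272 * c) / (2 * s)))) / (2 * s)^2))
      + (-13/440 + Real.sqrt 7 / 88 * ((14 * x + 272 * c) / (2 * s))) - 8/35
      = (Real.sqrt 7 * (665280 * c^2 * x + 35 * (7*x + 136*c) * s^2) - 795 * s^2 * s) / (3080 * s^2 * s) := by
    field_simp
    linear_combination (1328096000 * x * Real.sqrt 7) * hsq
  have hden2 : (0:ℝ) < 3080 * s^2 * s := by positivity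
  have hfrac : (Real.sqrt 7 * (665280 * c^2 * x + 35 * (7*x + 136*c) * s^2) - 795 * s^2 * s) / (3080 * s^2 * s) < 0 :=
    div_neg_of_neg_of_pos (by linarith) hden2
  linarith
end
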